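/- Let X₁, X₂, … be IID random variables on a standard discrete poset (S, ⪯) with common PDF f having support S and constant rate α, with UPF F, and let Y₁, Y₂, … be the associated ladder variables. Then for every n ≥ 1 and every chain y₁ ⪯ y₂ ⪯ ⋯ ⪯ y_n in S, P(Y₁ = y₁, Y₂ = y₂, …, Y_n = y_n) = α^n F(y_n). Consequently, for each y ∈ S, the conditional distribution of (Y₁, …, Y_{n−1}) given Y_n = y is uniform on the set of chains {(y₁, …, y_{n−1}) : y₁ ⪯ ⋯ ⪯ y_{n−1} ⪯ y}. -/

import Mathlib

open scoped ENNReal NNReal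
open MeasureTheory ProbabilityTheory

/-- The upper probability function (UPF) of a density `f` on a discrete poset:
`F x = ∑_{t ⪰ x} f t`, computed in `[0,∞]`. -/
noncomputable def upf {S : Type*} [PartialOrder S] (f : S → ℝ≥0) (x : S) : ℝ≥0∞ :=
  ∑' t : {t : S // x ≤ t}, (f t : ℝ≥0∞)

/-- The ladder times of a sequence `X₀, X₁, X₂, …`: `N₀ = 0` and
`N_{n+1} = min {m > N_n : X_m ⪰ X_{N_n}}` (indexed from `0`, so `ladderTime X n`
is the `(n+1)`-st ladder time of the paper). -/
noncomputable def ladderTime {Ω S : Type*} [PartialOrder S] (X : ℕ → Ω → S) :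
    ℕ → Ω → ℕ
  | 0 => fun _ => 0
  | (n + 1) => fun ω =>
      sInf {m : ℕ | ladderTime X n ω < m ∧ X (ladderTime X n ω) ω ≤ X m ω}

/-- The ladder variables: `Y_n = X_{N_n}` (indexed from `0`, so `ladderVar X n` is the
`(n+1)`-st ladder variable of the paper). -/
noncomputable def ladderVar {Ω S : Type*} [PartialOrder S] (X : ℕ → Ω → S)
    (n : ℕ) (ω : Ω) : S :=
  X (ladderTime X n ω) ω

set_option linter.unusedSectionVars false

namespace LadderAux

lemma measAll {T : Type*} [Countable T] [MeasurableSpace T] [MeasurableSingletonClass T]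
    (B : Set T) : MeasurableSet B := B.to_countable.measurableSet

variable {S : Type*} [Countable S] [PartialOrder S] [MeasurableSpace S]
    [MeasurableSingletonClass S]
    {Ω : Type*} [MeasurableSpace Ω] {P : Measure Ω} [IsProbabilityMeasure P]
    {f : S → ℝ≥0} {X : ℕ → Ω → S}

section meas

variable (hmeas : ∀ i, Measurable (X i))
include hmeas

lemma measurable_sInfSet {T : Ω → Set ℕ} (hT : ∀ m, MeasurableSet {ω | m ∈ T ω}) :
    Measurable fun ω => sInf (T ω) := by
  apply measurable_to_countable'
  intro k
  have hk : (fun ω => sInf (T ω)) ⁻¹' {k} =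
      ({ω | k ∈ T ω} ∩ ⋂ m, ⋂ _ : m < k, {ω | m ∈ T ω}ᶜ) ∪
      ((if k = 0 then Set.univ else ∅) ∩ ⋂ m, {ω | m ∈ T ω}ᶜ) := by
    ext ω
    simp only [Set.mem_preimage, Set.mem_singleton_iff, Set.mem_union, Set.mem_inter_iff,
      Set.mem_iInter, Set.mem_compl_iff, Set.mem_setOf_eq]
    constructor
    · intro h
      rcases Set.eq_empty_or_nonempty (T ω) with he | hne
      · right
        subst h
        simp [he, Nat.sInf_empty]
      · left
        refine ⟨h ▸ Nat.sInf_mem hne, fun m hm => ?_⟩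
        exact Nat.notMem_of_lt_sInf (h ▸ hm)
    · rintro (⟨hmem, hlt⟩ | ⟨hk0, hall⟩)
      · refine le_antisymm (Nat.sInf_le hmem) ?_
        by_contra hcon
        push_neg at hcon
        have hne : (T ω).Nonempty := ⟨k, hmem⟩
        exact hlt _ hcon (Nat.sInf_mem hne)
      · have : T ω = ∅ := Set.eq_empty_iff_forall_notMem.2 hall
        rw [this, Nat.sInf_empty]
        by_contra hc
        simp [Ne.symm hc] at hk0
  rw [hk]
  refine MeasurableSet.union ?_ ?_
  · exact (hT k).inter (MeasurableSet.iInter fun m => MeasurableSet.iInter fun _ => (hT m).compl)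
  · refine MeasurableSet.inter ?_ (MeasurableSet.iInter fun m => (hT m).compl)
    split <;> simp

lemma measurable_cmp (j m : ℕ) : MeasurableSet {ω | X j ω ≤ X m ω} := by
  have : {ω | X j ω ≤ X m ω} = (fun ω => (X j ω, X m ω)) ⁻¹' {p : S × S | p.1 ≤ p.2} := rfl
  rw [this]
  exact ((hmeas j).prodMk (hmeas m)) (measAll _)

lemma measurable_ladderTime : ∀ n, Measurable (ladderTime X n)
  | 0 => measurable_const
  | (n + 1) => by
    have IH := measurable_ladderTime n
    apply measurable_sInfSet hmeas
    intro m
    have : {ω | m ∈ {m' : ℕ | ladderTime X n ω < m' ∧ X (ladderTime X n ω) ω ≤ X m' ω}} =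
        ⋃ j, (ladderTime X n ⁻¹' {j}) ∩ {ω | j < m ∧ X j ω ≤ X m ω} := by
      ext ω
      simp only [Set.mem_setOf_eq, Set.mem_iUnion, Set.mem_inter_iff, Set.mem_preimage,
        Set.mem_singleton_iff]
      constructor
      · intro h; exact ⟨ladderTime X n ω, rfl, h⟩
      · rintro ⟨j, rfl, h⟩; exact h
    rw [this]
    refine MeasurableSet.iUnion fun j => (IH (measurableSet_singleton j)).inter ?_
    by_cases hjm : j < m
    · have : {ω | j < m ∧ X j ω ≤ X m ω} = {ω | X j ω ≤ X m ω} := by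
        ext ω; simp [hjm]
      rw [this]; exact measurable_cmp hmeas j m
    · have : {ω | j < m ∧ X j ω ≤ X m ω} = ∅ := by
        ext ω; simp [hjm]
      rw [this]; exact MeasurableSet.empty

lemma measurable_ladderVar (n : ℕ) : Measurable (ladderVar X n) := by
  apply measurable_to_countable'
  intro y
  have : ladderVar X n ⁻¹' {y} =
      ⋃ j, (ladderTime X n ⁻¹' {j}) ∩ (X j ⁻¹' {y}) := by
    ext ω
    simp only [Set.mem_preimage, Set.mem_singleton_iff, Set.mem_iUnion, Set.mem_inter_iff,
      ladderVar]
    constructor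
    · intro h; exact ⟨ladderTime X n ω, rfl, h⟩
    · rintro ⟨j, hj, h⟩; rw [hj]; exact h
  rw [this]
  exact MeasurableSet.iUnion fun j =>
    ((measurable_ladderTime hmeas n) (measurableSet_singleton j)).inter
      ((hmeas j) (measAll _))

end meas

def upSet (t : S) : Set S := {s | t ≤ s}

section dist
variable (hmeas : ∀ i, Measurable (X i)) (hdist : ∀ i (x : S), P (X i ⁻¹' {x}) = (f x : ℝ≥0∞))
include hmeas hdist

lemma meas_preimage (i : ℕ) (B : Set S) :
    P (X i ⁻¹' B) = ∑' x : B, (f x : ℝ≥0∞) := by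
  have h1 : X i ⁻¹' B = ⋃ x : B, X i ⁻¹' {(x : S)} := by
    ext ω; simp
  rw [h1, measure_iUnion ?_ fun x => (hmeas i) (measAll _)]
  · simp [hdist]
  · intro a b hab
    simp only [Set.disjoint_left, Set.mem_preimage, Set.mem_singleton_iff]
    intro ω h1 h2
    exact hab (Subtype.ext (h1 ▸ h2))

lemma meas_upSet (i : ℕ) (t : S) : P (X i ⁻¹' upSet t) = upf f t := by
  rw [meas_preimage hmeas hdist i (upSet t)]
  rfl

lemma meas_upSet_compl (i : ℕ) (t : S) :
    P (X i ⁻¹' (upSet t)ᶜ) = 1 - upf f t := by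
  rw [Set.preimage_compl, prob_compl_eq_one_sub ((hmeas i) (measAll _)),
    meas_upSet hmeas hdist i t]

end dist

section upfbd
variable (hpdf : ∑' x : S, (f x : ℝ≥0∞) = 1) (hsupp : ∀ x : S, 0 < f x)

include hpdf in
lemma upf_le_one (t : S) : upf f t ≤ 1 := by
  rw [← hpdf]
  unfold upf
  exact ENNReal.summable.tsum_le_tsum_of_inj Subtype.val Subtype.val_injective
    (fun c _ => zero_le) (fun b => le_rfl) ENNReal.summable

include hsupp in
lemma upf_pos (t : S) : 0 < upf f t := by
  have : (f t : ℝ≥0∞) ≤ upf f t := by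
    unfold upf
    exact ENNReal.le_tsum (⟨t, le_refl t⟩ : {t' : S // t ≤ t'})
  refine lt_of_lt_of_le ?_ this
  exact_mod_cast hsupp t

include hpdf in
lemma upf_ne_top (t : S) : upf f t ≠ ⊤ :=
  ne_top_of_le_ne_top ENNReal.one_ne_top (upf_le_one hpdf t)

end upfbd

section bad
variable (hmeas : ∀ i, Measurable (X i)) (hdist : ∀ i (x : S), P (X i ⁻¹' {x}) = (f x : ℝ≥0∞))
  (hsupp : ∀ x : S, 0 < f x) (hpdf : ∑' x : S, (f x : ℝ≥0∞) = 1)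
  (hindep : iIndepFun X P)
include hmeas hdist hsupp hpdf hindep

lemma neverUp_null (j : ℕ) (t : S) :
    P {ω | ∀ m, j < m → ¬ t ≤ X m ω} = 0 := by
  set r : ℝ≥0∞ := 1 - upf f t with hr
  have hrlt : r < 1 := ENNReal.sub_lt_self ENNReal.one_ne_top one_ne_zero (upf_pos hsupp t).ne'
  have hbound : ∀ k : ℕ, P {ω | ∀ m, j < m → ¬ t ≤ X m ω} ≤ r ^ k := by
    intro k
    have hsub : {ω | ∀ m, j < m → ¬ t ≤ X m ω} ⊆
        ⋂ m ∈ Finset.Ioc j (j + k), X m ⁻¹' (upSet t)ᶜ := by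
      intro ω hω
      simp only [Set.mem_iInter, Finset.mem_Ioc, Set.mem_preimage, Set.mem_compl_iff]
      intro m ⟨h1, _⟩
      exact hω m h1
    refine le_trans (measure_mono hsub) ?_
    rw [hindep.meas_biInter (fun m _ => ⟨(upSet t)ᶜ, measAll _, rfl⟩)]
    apply le_of_eq
    calc ∏ m ∈ Finset.Ioc j (j + k), P (X m ⁻¹' (upSet t)ᶜ)
        = ∏ m ∈ Finset.Ioc j (j + k), r := by
          refine Finset.prod_congr rfl fun m _ => ?_
          exact meas_upSet_compl hmeas hdist m t
      _ = r ^ k := by rw [Finset.prod_const, Nat.card_Ioc]; congr 1; omega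
  have htend : Filter.Tendsto (fun k : ℕ => r ^ k) Filter.atTop (nhds 0) :=
    ENNReal.tendsto_pow_atTop_nhds_zero_of_lt_one hrlt
  have := ge_of_tendsto' htend hbound
  exact le_antisymm this zero_le

def bad (X : ℕ → Ω → S) : Set Ω := ⋃ (j : ℕ) (t : S), {ω | ∀ m, j < m → ¬ t ≤ X m ω}

lemma bad_null : P (bad X) = 0 :=
  measure_iUnion_null fun j => measure_iUnion_null fun t =>
    neverUp_null hmeas hdist hsupp hpdf hindep j t

end bad
def K (g : ℕ → ℕ) : ℕ → ℕ
  | 0 => 0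
  | (i + 1) => K g i + g i + 1

lemma K_strictMono (g : ℕ → ℕ) : StrictMono (K g) :=
  strictMono_nat_of_lt_succ fun n => by simp [K]

lemma self_le_K (g : ℕ → ℕ) : ∀ i, i ≤ K g i
  | 0 => le_refl 0
  | (i + 1) => by have := self_le_K g i; simp [K]; omega

lemma K_congr {g g' : ℕ → ℕ} : ∀ {i}, (∀ j < i, g j = g' j) → K g i = K g' i
  | 0, _ => rfl
  | (i + 1), h => by
      simp only [K]
      rw [K_congr fun j hj => h j (by omega), h i (by omega)]

noncomputable def lastIdx (g : ℕ → ℕ) (m : ℕ) : ℕ := sSup {i | K g i ≤ m}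

lemma lastIdx_spec (g : ℕ → ℕ) (m : ℕ) :
    K g (lastIdx g m) ≤ m ∧ m < K g (lastIdx g m + 1) := by
  have hbdd : BddAbove {i | K g i ≤ m} := ⟨m, fun i hi => le_trans (self_le_K g i) hi⟩
  have hne : {i | K g i ≤ m}.Nonempty := ⟨0, by simp [K]⟩
  constructor
  · exact Nat.sSup_mem hne hbdd
  · by_contra h
    push_neg at h
    have hmem : lastIdx g m + 1 ∈ {i | K g i ≤ m} := h
    have h2 : lastIdx g m + 1 ≤ lastIdx g m := le_csSup hbdd hmem
    omega

lemma lastIdx_eq (g : ℕ → ℕ) {i m : ℕ} (h1 : K g i ≤ m) (h2 : m < K g (i + 1)) :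
    lastIdx g m = i := by
  obtain ⟨hA, hB⟩ := lastIdx_spec g m
  by_contra hne
  rcases lt_or_gt_of_ne hne with hlt | hgt
  · have : lastIdx g m + 1 ≤ i := hlt
    have := (K_strictMono g).le_iff_le.2 this
    omega
  · have : i + 1 ≤ lastIdx g m := hgt
    have := (K_strictMono g).le_iff_le.2 this
    omega

lemma lastIdx_K (g : ℕ → ℕ) (i : ℕ) : lastIdx g (K g i) = i :=
  lastIdx_eq g (le_refl _) (K_strictMono g (by omega))

/-- the per-coordinate constraint set -/
def BSet (g : ℕ → ℕ) (y : ℕ → S) (m : ℕ) : Set S :=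
  if K g (lastIdx g m) = m then {y (lastIdx g m)} else (upSet (y (lastIdx g m)))ᶜ

/-- the elementary event -/
def evE (X : ℕ → Ω → S) (g : ℕ → ℕ) (y : ℕ → S) (n : ℕ) : Set Ω :=
  ⋂ m ∈ Finset.range (K g (n - 1) + 1), X m ⁻¹' BSet g y m

lemma mem_evE {g : ℕ → ℕ} {y : ℕ → S} {n : ℕ} (hn : 1 ≤ n) {ω : Ω} :
    ω ∈ evE X g y n ↔
      (∀ i < n, X (K g i) ω = y i) ∧
      (∀ i, i + 1 < n → ∀ m, K g i < m → m < K g (i + 1) → ¬ y i ≤ X m ω) := by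
  simp only [evE, Set.mem_iInter, Finset.mem_range, Set.mem_preimage]
  constructor
  · intro h
    constructor
    · intro i hi
      have hle : K g i ≤ K g (n - 1) := (K_strictMono g).le_iff_le.2 (by omega)
      have := h (K g i) (by omega)
      simpa [BSet, lastIdx_K] using this
    · intro i hi m hm1 hm2
      have hle : K g (i + 1) ≤ K g (n - 1) := (K_strictMono g).le_iff_le.2 (by omega)
      have := h m (by omega)
      rw [BSet, lastIdx_eq g (le_of_lt hm1) hm2] at this
      rw [if_neg (by omega)] at this
      simpa [upSet] using this
  · rintro ⟨h1, h2⟩ m hm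
    obtain ⟨hA, hB⟩ := lastIdx_spec g m
    have hin : lastIdx g m ≤ n - 1 := by
      by_contra hc
      push_neg at hc
      have hKK := (K_strictMono g) hc
      omega
    rw [BSet]
    by_cases hKm : K g (lastIdx g m) = m
    · rw [if_pos hKm, Set.mem_singleton_iff]
      have hx := h1 (lastIdx g m) (by omega)
      rw [hKm] at hx
      exact hx
    · rw [if_neg hKm]
      have him : lastIdx g m + 1 < n := by
        rcases Nat.lt_or_ge (lastIdx g m + 1) n with h | h
        · exact h
        · exfalso
          have hieq : lastIdx g m = n - 1 := by omega
          rw [hieq] at hA hKm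
          omega
      exact h2 (lastIdx g m) him m (by omega) hB

section ladder
variable {g : ℕ → ℕ} {y : ℕ → S} {n : ℕ}

lemma ladderTime_eq_of_evE (hchain : ∀ i, i + 1 < n → y i ≤ y (i + 1)) (hn : 1 ≤ n)
    {ω : Ω} (hω : ω ∈ evE X g y n) : ∀ i < n, ladderTime X i ω = K g i := by
  obtain ⟨h1, h2⟩ := (mem_evE hn).1 hω
  intro i
  induction i with
  | zero => intro _; rfl
  | succ i IH =>
    intro hi
    have hNi := IH (by omega)
    show sInf _ = K g (i + 1)
    rw [hNi]
    have hmem : K g (i + 1) ∈ {m : ℕ | K g i < m ∧ X (K g i) ω ≤ X m ω} := by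
      refine ⟨K_strictMono g (by omega), ?_⟩
      rw [h1 i (by omega), h1 (i + 1) hi]
      exact hchain i hi
    refine le_antisymm (Nat.sInf_le hmem) ?_
    refine le_csInf ⟨_, hmem⟩ ?_
    intro m ⟨hm1, hm2⟩
    by_contra hc
    push_neg at hc
    rw [h1 i (by omega)] at hm2
    exact h2 i hi m hm1 hc hm2

lemma evE_subset (hchain : ∀ i, i + 1 < n → y i ≤ y (i + 1)) (hn : 1 ≤ n) :
    evE X g y n ⊆ {ω | ∀ i < n, ladderVar X i ω = y i} := by
  intro ω hω i hi
  have hN := ladderTime_eq_of_evE hchain hn hω i hi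
  have h1 := ((mem_evE hn).1 hω).1 i hi
  rw [ladderVar, hN, h1]

end ladder

lemma ladderTime_lt_of_not_bad {ω : Ω} (hω : ω ∉ bad X) (i : ℕ) :
    ladderTime X i ω < ladderTime X (i + 1) ω ∧
      X (ladderTime X i ω) ω ≤ X (ladderTime X (i + 1) ω) ω := by
  simp only [bad, Set.mem_iUnion, Set.mem_setOf_eq, not_exists] at hω
  push_neg at hω
  obtain ⟨m, hm1, hm2⟩ := hω (ladderTime X i ω) (X (ladderTime X i ω) ω)
  have hne : {m : ℕ | ladderTime X i ω < m ∧ X (ladderTime X i ω) ω ≤ X m ω}.Nonempty :=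
    ⟨m, hm1, hm2⟩
  exact Nat.sInf_mem hne

def ext (n : ℕ) (g' : Fin n → ℕ) : ℕ → ℕ := fun i => if h : i < n then g' ⟨i, h⟩ else 0

lemma subset_union_evE {y : ℕ → S} {m : ℕ} :
    {ω | ∀ i < m + 1, ladderVar X i ω = y i} ⊆
      bad X ∪ ⋃ g' : Fin m → ℕ, evE X (ext m g') y (m + 1) := by
  intro ω hω
  by_cases hb : ω ∈ bad X
  · exact Or.inl hb
  right
  set N : ℕ → ℕ := fun i => ladderTime X i ω with hN
  have hstep := ladderTime_lt_of_not_bad hb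
  refine Set.mem_iUnion.2 ⟨fun i => N (i + 1) - N i - 1, ?_⟩
  set g : ℕ → ℕ := ext m (fun i => N (i + 1) - N i - 1) with hg
  have hKN : ∀ i < m + 1, K g i = N i := by
    intro i
    induction i with
    | zero => intro _; rfl
    | succ i IH =>
      intro hi
      have hKi := IH (by omega)
      have hlt : N i < N (i + 1) := (hstep i).1
      show K g i + g i + 1 = N (i + 1)
      rw [hKi]
      have : g i = N (i + 1) - N i - 1 := by
        simp only [hg, ext, dif_pos (show i < m by omega)]
      omega
  rw [mem_evE (by omega : 1 ≤ m + 1)]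
  constructor
  · intro i hi
    rw [hKN i hi]
    exact hω i hi
  · intro i hi mm hm1 hm2
    rw [hKN i (by omega)] at hm1
    rw [hKN (i + 1) (by omega)] at hm2
    have hnotmem := Nat.notMem_of_lt_sInf (show mm < N (i + 1) from hm2)
    simp only [Set.mem_setOf_eq, not_and] at hnotmem
    intro hle
    exact hnotmem hm1 (by rw [show X (ladderTime X i ω) ω = y i from hω i (by omega)]; exact hle)

lemma evE_disjoint {y : ℕ → S} {m : ℕ} (hchain : ∀ i, i + 1 < m + 1 → y i ≤ y (i + 1)) :
    Pairwise (Function.onFun Disjoint fun g' : Fin m → ℕ => evE X (ext m g') y (m + 1)) := by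
  intro g1 g2 hne
  simp only [Function.onFun, Set.disjoint_left]
  intro ω h1 h2
  apply hne
  funext i
  have e1 := ladderTime_eq_of_evE hchain (by omega) h1
  have e2 := ladderTime_eq_of_evE hchain (by omega) h2
  have k1 : ∀ j < m + 1, K (ext m g1) j = K (ext m g2) j := by
    intro j hj
    rw [← e1 j hj, e2 j hj]
  have hlt : (i : ℕ) + 1 < m + 1 := by omega
  have ha := k1 ((i : ℕ) + 1) hlt
  have hb := k1 (i : ℕ) (by omega)
  simp only [K] at ha
  have : ext m g1 i = ext m g2 i := by omega
  simpa only [ext, dif_pos i.isLt, Fin.eta] using this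


section prodsec
variable (hmeas : ∀ i, Measurable (X i)) (hdist : ∀ i (x : S), P (X i ⁻¹' {x}) = (f x : ℝ≥0∞))
  (hindep : iIndepFun X P)
  (hsupp : ∀ x : S, 0 < f x) (hpdf : ∑' x : S, (f x : ℝ≥0∞) = 1)

include hindep in
lemma meas_evE (g : ℕ → ℕ) (y : ℕ → S) (n : ℕ) :
    P (evE X g y n) = ∏ m ∈ Finset.range (K g (n - 1) + 1), P (X m ⁻¹' BSet g y m) :=
  hindep.meas_biInter fun m _ => ⟨BSet g y m, measAll _, rfl⟩

include hmeas hdist in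
lemma prod_BSet (g : ℕ → ℕ) (y : ℕ → S) : ∀ m : ℕ,
    ∏ r ∈ Finset.range (K g m + 1), P (X r ⁻¹' BSet g y r)
      = (f (y 0) : ℝ≥0∞) *
        ∏ i ∈ Finset.range m, ((1 - upf f (y i)) ^ g i * (f (y (i + 1)) : ℝ≥0∞))
  | 0 => by
    have hB : BSet g y 0 = {y 0} := by
      have hl : lastIdx g 0 = 0 := lastIdx_eq g (le_of_eq rfl)
        (by have h1 : K g (0 + 1) = K g 0 + g 0 + 1 := rfl
            have h0 : K g 0 = 0 := rfl
            omega)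
      rw [BSet, hl, show K g 0 = 0 from rfl, if_pos rfl]
    rw [show K g 0 + 1 = 1 from rfl, Finset.range_one, Finset.prod_singleton, hB, hdist 0 (y 0),
      Finset.range_zero, Finset.prod_empty, mul_one]
  | (m + 1) => by
    have IH := prod_BSet g y m
    have hklt : K g m < K g (m + 1) := K_strictMono g (by omega)
    have hKsucc : K g (m + 1) = K g m + g m + 1 := rfl
    rw [Finset.range_eq_Ico,
      ← Finset.prod_Ico_consecutive _ (Nat.zero_le (K g m + 1))
        (show K g m + 1 ≤ K g (m + 1) + 1 by omega),
      ← Finset.range_eq_Ico, IH,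
      Finset.prod_Ico_succ_top (show K g m + 1 ≤ K g (m + 1) by omega),
      Finset.Ico_add_one_left_eq_Ioo]
    have hBtop : BSet g y (K g (m + 1)) = {y (m + 1)} := by
      rw [BSet, lastIdx_K, if_pos rfl]
    have hgap : ∀ r ∈ Finset.Ioo (K g m) (K g (m + 1)),
        P (X r ⁻¹' BSet g y r) = 1 - upf f (y m) := by
      intro r hr
      rw [Finset.mem_Ioo] at hr
      have hl : lastIdx g r = m := lastIdx_eq g (le_of_lt hr.1) hr.2
      have hBr : BSet g y r = (upSet (y m))ᶜ := by
        rw [BSet, hl, if_neg (by omega)]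
      rw [hBr, meas_upSet_compl hmeas hdist]
    rw [Finset.prod_congr rfl hgap, Finset.prod_const, Nat.card_Ioo, hBtop, hdist,
      Finset.prod_range_succ]
    have hcard : K g (m + 1) - K g m - 1 = g m := by omega
    rw [hcard]
    ring

lemma tsum_pi_prod : ∀ (m : ℕ) (h : Fin m → ℕ → ℝ≥0∞),
    ∑' g : Fin m → ℕ, ∏ i, h i (g i) = ∏ i, ∑' k, h i k
  | 0, h => by
    rw [tsum_eq_single (fun i => i.elim0) (fun b hb =>
      absurd (funext fun i => i.elim0) (Ne.symm hb))]
    · simp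
  | (m + 1), h => by
    rw [← (Fin.consEquiv (fun _ : Fin (m + 1) => ℕ)).tsum_eq]
    have hterm : ∀ p : ℕ × (Fin m → ℕ),
        (∏ i, h i ((Fin.consEquiv (fun _ : Fin (m + 1) => ℕ)) p i)) =
          h 0 p.1 * ∏ i : Fin m, h i.succ (p.2 i) := by
      intro p
      rw [Fin.prod_univ_succ]
      simp [Fin.consEquiv]
    rw [tsum_congr hterm,
      ENNReal.tsum_prod (f := fun a (b : Fin m → ℕ) => h 0 a * ∏ i : Fin m, h i.succ (b i))]
    simp_rw [ENNReal.tsum_mul_left, ENNReal.tsum_mul_right]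
    rw [tsum_pi_prod m (fun i => h i.succ), Fin.prod_univ_succ]

include hpdf in
lemma tsum_geom_fac (t : S) (c : ℝ≥0∞) :
    ∑' k : ℕ, (1 - upf f t) ^ k * c = (upf f t)⁻¹ * c := by
  rw [ENNReal.tsum_mul_right, ENNReal.tsum_geometric,
    ENNReal.sub_sub_cancel ENNReal.one_ne_top (upf_le_one hpdf t)]

end prodsec

section main
variable {α : ℝ}
variable (hmeas : ∀ i, Measurable (X i)) (hdist : ∀ i (x : S), P (X i ⁻¹' {x}) = (f x : ℝ≥0∞))
  (hindep : iIndepFun X P)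
  (hsupp : ∀ x : S, 0 < f x) (hpdf : ∑' x : S, (f x : ℝ≥0∞) = 1)
  (hrate : ∀ x : S, (f x : ℝ≥0∞) = ENNReal.ofReal α * upf f x)

include hsupp hpdf hrate in
lemma telescope (y : ℕ → S) : ∀ m : ℕ,
    (f (y 0) : ℝ≥0∞) * ∏ i ∈ Finset.range m, ((upf f (y i))⁻¹ * (f (y (i + 1)) : ℝ≥0∞))
      = ENNReal.ofReal α ^ (m + 1) * upf f (y m)
  | 0 => by
    rw [Finset.range_zero, Finset.prod_empty, mul_one, show (0 : ℕ) + 1 = 1 from rfl, pow_one]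
    exact hrate (y 0)
  | (m + 1) => by
    rw [Finset.prod_range_succ, ← mul_assoc, telescope y m, hrate (y (m + 1))]
    have hF0 : upf f (y m) ≠ 0 := (upf_pos hsupp (y m)).ne'
    have hFt : upf f (y m) ≠ ⊤ := upf_ne_top hpdf (y m)
    calc ENNReal.ofReal α ^ (m + 1) * upf f (y m) *
          ((upf f (y m))⁻¹ * (ENNReal.ofReal α * upf f (y (m + 1))))
        = ENNReal.ofReal α ^ (m + 1 + 1) * upf f (y (m + 1)) * (upf f (y m) * (upf f (y m))⁻¹) := by
          ring
      _ = ENNReal.ofReal α ^ (m + 1 + 1) * upf f (y (m + 1)) := by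
          rw [ENNReal.mul_inv_cancel hF0 hFt, mul_one]

include hmeas hdist hindep hsupp hpdf hrate in
lemma joint_succ (m : ℕ) (y : ℕ → S)
    (hchain : ∀ i, i + 1 < m + 1 → y i ≤ y (i + 1)) :
    P {ω | ∀ i < m + 1, ladderVar X i ω = y i}
      = ENNReal.ofReal α ^ (m + 1) * upf f (y m) := by
  have hsub1 : (⋃ g' : Fin m → ℕ, evE X (ext m g') y (m + 1)) ⊆
      {ω | ∀ i < m + 1, ladderVar X i ω = y i} :=
    Set.iUnion_subset fun g' => evE_subset hchain (by omega)
  have hmeasE : ∀ g' : Fin m → ℕ, MeasurableSet (evE X (ext m g') y (m + 1)) := fun g' =>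
    Finset.measurableSet_biInter _ fun r _ => (hmeas r) (measAll _)
  have hPU : P {ω | ∀ i < m + 1, ladderVar X i ω = y i}
      = P (⋃ g' : Fin m → ℕ, evE X (ext m g') y (m + 1)) := by
    refine le_antisymm ?_ (measure_mono hsub1)
    calc P {ω | ∀ i < m + 1, ladderVar X i ω = y i}
        ≤ P (bad X ∪ ⋃ g' : Fin m → ℕ, evE X (ext m g') y (m + 1)) :=
          measure_mono subset_union_evE
      _ ≤ P (bad X) + P (⋃ g' : Fin m → ℕ, evE X (ext m g') y (m + 1)) := measure_union_le _ _
      _ = P (⋃ g' : Fin m → ℕ, evE X (ext m g') y (m + 1)) := by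
          rw [bad_null hmeas hdist hsupp hpdf hindep, zero_add]
  rw [hPU, measure_iUnion (evE_disjoint hchain) hmeasE]
  have hterm : ∀ g' : Fin m → ℕ, P (evE X (ext m g') y (m + 1)) =
      (f (y 0) : ℝ≥0∞) *
        ∏ i : Fin m, ((1 - upf f (y (i : ℕ))) ^ g' i * (f (y ((i : ℕ) + 1)) : ℝ≥0∞)) := by
    intro g'
    rw [meas_evE hindep, show (m + 1) - 1 = m from rfl, prod_BSet hmeas hdist]
    congr 1
    rw [← Fin.prod_univ_eq_prod_range
      (fun i => (1 - upf f (y i)) ^ (ext m g' i) * (f (y (i + 1)) : ℝ≥0∞)) m]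
    refine Finset.prod_congr rfl fun i _ => ?_
    congr 2
    simp [ext, i.isLt]
  rw [tsum_congr hterm, ENNReal.tsum_mul_left,
    tsum_pi_prod m (fun i k => (1 - upf f (y (i : ℕ))) ^ k * (f (y ((i : ℕ) + 1)) : ℝ≥0∞))]
  have hgeo : ∀ i : Fin m, (∑' k : ℕ, (1 - upf f (y (i : ℕ))) ^ k * (f (y ((i : ℕ) + 1)) : ℝ≥0∞))
      = (upf f (y (i : ℕ)))⁻¹ * (f (y ((i : ℕ) + 1)) : ℝ≥0∞) :=
    fun i => tsum_geom_fac hpdf (y (i : ℕ)) _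
  rw [Finset.prod_congr rfl fun i _ => hgeo i,
    Fin.prod_univ_eq_prod_range (fun i => (upf f (y i))⁻¹ * (f (y (i + 1)) : ℝ≥0∞)) m,
    telescope hsupp hpdf hrate y m]

end main

lemma Y_mono_of_not_bad {ω : Ω} (hω : ω ∉ bad X) : ∀ i j, i ≤ j →
    ladderVar X i ω ≤ ladderVar X j ω := by
  intro i j hij
  induction j with
  | zero =>
    have : i = 0 := by omega
    subst this; exact le_refl _
  | succ j IH =>
    rcases Nat.lt_or_ge i (j + 1) with h | h
    · exact le_trans (IH (by omega)) (ladderTime_lt_of_not_bad hω j).2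
    · have : i = j + 1 := by omega
      subst this; exact le_refl _

section cond
variable {α : ℝ} (hα : 0 < α)
variable (hfin : ∀ x : S, {t : S | t ≤ x}.Finite)
variable (hmeas : ∀ i, Measurable (X i)) (hdist : ∀ i (x : S), P (X i ⁻¹' {x}) = (f x : ℝ≥0∞))
  (hindep : iIndepFun X P)
  (hsupp : ∀ x : S, 0 < f x) (hpdf : ∑' x : S, (f x : ℝ≥0∞) = 1)
  (hrate : ∀ x : S, (f x : ℝ≥0∞) = ENNReal.ofReal α * upf f x)

include hα hfin hmeas hdist hindep hsupp hpdf hrate in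
lemma condPart (m : ℕ) (y : S) (c : ℕ → S)
    (hc1 : ∀ i, i + 1 < m → c i ≤ c (i + 1)) (hc2 : ∀ i, i < m → c i ≤ y) :
    P[{ω | ∀ i < m, ladderVar X i ω = c i} | {ω | ladderVar X m ω = y}]
      = (Nat.card {c' : Fin m → S // Monotone c' ∧ ∀ i, c' i ≤ y} : ℝ≥0∞)⁻¹ := by
  classical
  set v : ℝ≥0∞ := ENNReal.ofReal α ^ (m + 1) * upf f y with hv
  have hv0 : v ≠ 0 := by
    refine mul_ne_zero (pow_ne_zero _ ?_) (upf_pos hsupp y).ne'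
    exact (ENNReal.ofReal_pos.2 hα).ne'
  have hvtop : v ≠ ⊤ :=
    ENNReal.mul_ne_top (ENNReal.pow_ne_top ENNReal.ofReal_ne_top) (upf_ne_top hpdf y)
  -- joint value for any admissible prefix
  have hjointc : ∀ c'' : ℕ → S, (∀ i, i + 1 < m → c'' i ≤ c'' (i + 1)) →
      (∀ i, i < m → c'' i ≤ y) →
      P {ω | (∀ i < m, ladderVar X i ω = c'' i) ∧ ladderVar X m ω = y} = v := by
    intro c'' h1 h2
    have hset : {ω | (∀ i < m, ladderVar X i ω = c'' i) ∧ ladderVar X m ω = y}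
        = {ω | ∀ i < m + 1, ladderVar X i ω = (fun i => if i < m then c'' i else y) i} := by
      ext ω
      simp only [Set.mem_setOf_eq]
      constructor
      · rintro ⟨ha, hb⟩ i hi
        by_cases him : i < m
        · simpa [him] using ha i him
        · have hieq : i = m := by omega
          subst hieq
          simpa [him] using hb
      · intro h
        refine ⟨fun i hi => ?_, ?_⟩
        · simpa [hi] using h i (by omega)
        · simpa using h m (by omega)
    rw [hset, joint_succ hmeas hdist hindep hsupp hpdf hrate m _ ?_]
    · simp [hv]
    · intro i hi
      have him : i < m := by omega
      by_cases h2' : i + 1 < m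
      · simpa [him, h2'] using h1 i h2'
      · have hieq : ¬ (i + 1 < m) := h2'
        simpa [him, hieq] using h2 i him
  set G : Set (Fin m → S) := {c' | Monotone c' ∧ ∀ i, c' i ≤ y} with hG
  have hGfin : G.Finite := by
    refine (Set.Finite.pi' (fun _ : Fin m => hfin y)).subset ?_
    intro c' hc' i
    exact hc'.2 i
  -- pieces
  set piece : (Fin m → S) → Set Ω := fun c' =>
    {ω | ∀ i < m + 1, ladderVar X i ω = (fun i => if h : i < m then c' ⟨i, h⟩ else y) i}
    with hpiece
  have hpieceMeas : ∀ c' : Fin m → S, MeasurableSet (piece c') := by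
    intro c'
    have : piece c' = ⋂ (i : ℕ) (_ : i < m + 1),
        ladderVar X i ⁻¹' {(fun i => if h : i < m then c' ⟨i, h⟩ else y) i} := by
      ext ω
      simp [hpiece, Set.mem_iInter]
    rw [this]
    exact MeasurableSet.iInter fun i => MeasurableSet.iInter fun _ =>
      (measurable_ladderVar hmeas i) (measAll _)
  have hBeq : {ω | ladderVar X m ω = y} = ⋃ c' : Fin m → S, piece c' := by
    ext ω
    simp only [Set.mem_setOf_eq, Set.mem_iUnion]
    constructor
    · intro hω
      refine ⟨fun i => ladderVar X (i : ℕ) ω, fun i hi => ?_⟩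
      by_cases him : i < m
      · simp [him]
      · have : i = m := by omega
        subst this
        simpa [him] using hω
    · rintro ⟨c', hc'⟩
      have := hc' m (by omega)
      simpa using this
  have hdisj : Pairwise (Function.onFun Disjoint piece) := by
    intro c1 c2 hne
    simp only [Function.onFun, Set.disjoint_left]
    intro ω h1 h2
    apply hne
    funext i
    have e1 := h1 (i : ℕ) (by omega)
    have e2 := h2 (i : ℕ) (by omega)
    simp only [dif_pos i.isLt, Fin.eta] at e1 e2
    rw [← e1, ← e2]
  have hpieceval : ∀ c' : Fin m → S, P (piece c') = if c' ∈ G then v else 0 := by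
    intro c'
    by_cases hcg : c' ∈ G
    · rw [if_pos hcg]
      obtain ⟨hmono, hley⟩ := hcg
      have hset2 : piece c' = {ω | (∀ i < m, ladderVar X i ω =
          (fun i => if h : i < m then c' ⟨i, h⟩ else y) i) ∧ ladderVar X m ω = y} := by
        ext ω
        simp only [hpiece, Set.mem_setOf_eq]
        constructor
        · intro h
          refine ⟨fun i hi => h i (by omega), ?_⟩
          simpa using h m (by omega)
        · rintro ⟨ha, hb⟩ i hi
          by_cases him : i < m
          · exact ha i him
          · have : i = m := by omega
            subst this
            simpa [him] using hb
      rw [hset2]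
      refine hjointc _ ?_ ?_
      · intro i hi
        have h1 : i < m := by omega
        simp only [dif_pos h1, dif_pos hi]
        exact hmono (by exact_mod_cast Nat.le_succ i)
      · intro i hi
        simp only [dif_pos hi]
        exact hley _
    · rw [if_neg hcg]
      refine measure_mono_null ?_ (bad_null hmeas hdist hsupp hpdf hindep)
      intro ω hω
      by_contra hb
      apply hcg
      have hYm : ladderVar X m ω = y := by simpa using hω m (by omega)
      have hYi : ∀ i : Fin m, ladderVar X (i : ℕ) ω = c' i := by
        intro i
        have := hω (i : ℕ) (by omega)
        simpa [dif_pos i.isLt, Fin.eta] using this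
      constructor
      · intro a b hab
        rw [← hYi a, ← hYi b]
        exact Y_mono_of_not_bad hb (a : ℕ) (b : ℕ) (by exact_mod_cast hab)
      · intro i
        rw [← hYi i, ← hYm]
        exact Y_mono_of_not_bad hb (i : ℕ) m (by omega)
  have hPB : P {ω | ladderVar X m ω = y} = (hGfin.toFinset.card : ℝ≥0∞) * v := by
    have hsum : (∑' c' : Fin m → S, if c' ∈ G then v else (0 : ℝ≥0∞))
        = ∑ c' ∈ hGfin.toFinset, (if c' ∈ G then v else (0 : ℝ≥0∞)) :=
      tsum_eq_sum (fun c' hc' => if_neg fun h => hc' (hGfin.mem_toFinset.2 h))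
    rw [hBeq, measure_iUnion hdisj hpieceMeas, tsum_congr hpieceval, hsum,
      Finset.sum_congr rfl (fun c' hc' => if_pos (hGfin.mem_toFinset.1 hc')),
      Finset.sum_const, nsmul_eq_mul]
  have hcard : (Nat.card {c' : Fin m → S // Monotone c' ∧ ∀ i, c' i ≤ y}) =
      hGfin.toFinset.card := by
    have h1 : Nat.card {c' : Fin m → S // Monotone c' ∧ ∀ i, c' i ≤ y} = G.ncard :=
      Nat.card_coe_set_eq G
    rw [h1, Set.ncard_eq_toFinset_card G hGfin]
  have hN0 : hGfin.toFinset.card ≠ 0 := by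
    have hmem : (fun _ : Fin m => y) ∈ G := ⟨monotone_const, fun i => le_refl y⟩
    have : hGfin.toFinset.Nonempty := ⟨_, hGfin.mem_toFinset.2 hmem⟩
    exact (Finset.card_pos.2 this).ne'
  have hBmeas : MeasurableSet {ω | ladderVar X m ω = y} :=
    (measurable_ladderVar hmeas m) (measAll {y})
  rw [cond_apply hBmeas P]
  have hint : {ω | ladderVar X m ω = y} ∩ {ω | ∀ i < m, ladderVar X i ω = c i}
      = {ω | (∀ i < m, ladderVar X i ω = c i) ∧ ladderVar X m ω = y} :=
    Set.ext fun ω => and_comm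
  rw [hint, hjointc c hc1 hc2, hPB, hcard]
  rw [ENNReal.mul_inv (Or.inl (by exact_mod_cast hN0)) (Or.inl (ENNReal.natCast_ne_top _)),
    mul_assoc, ENNReal.inv_mul_cancel hv0 hvtop, mul_one]

end cond

end LadderAux

/-- For an IID sequence with common PDF `f` (support `S`) of constant
rate `α` on a standard discrete poset, the ladder variables satisfy
`P(Y₁ = y₁, …, Y_n = y_n) = αⁿ F(y_n)` for every increasing chain `y₁ ⪯ ⋯ ⪯ y_n`;
consequently, given `Y_n = y`, the vector `(Y₁, …, Y_{n−1})` is uniformly distributed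
on the set of chains `y₁ ⪯ ⋯ ⪯ y_{n−1} ⪯ y`. -/
theorem ladderVar_joint_pdf_constantRate
    {S : Type*} [Countable S] [PartialOrder S] [MeasurableSpace S]
    [MeasurableSingletonClass S]
    (hfin : ∀ x : S, {t : S | t ≤ x}.Finite)
    {Ω : Type*} [MeasurableSpace Ω] (P : Measure Ω) [IsProbabilityMeasure P]
    (f : S → ℝ≥0)
    (hsupp : ∀ x : S, 0 < f x)
    (hpdf : ∑' x : S, (f x : ℝ≥0∞) = 1)
    (α : ℝ) (hα : 0 < α)
    (hrate : ∀ x : S, (f x : ℝ≥0∞) = ENNReal.ofReal α * upf f x)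
    (X : ℕ → Ω → S)
    (hmeas : ∀ i, Measurable (X i))
    (hindep : iIndepFun X P)
    (hdist : ∀ i (x : S), P (X i ⁻¹' {x}) = (f x : ℝ≥0∞)) :
    (∀ n : ℕ, 1 ≤ n → ∀ y : ℕ → S, (∀ i, i + 1 < n → y i ≤ y (i + 1)) →
      P {ω | ∀ i < n, ladderVar X i ω = y i}
        = ENNReal.ofReal α ^ n * upf f (y (n - 1))) ∧
    (∀ n : ℕ, 1 ≤ n → ∀ y : S, ∀ c : ℕ → S,
      (∀ i, i + 1 < n - 1 → c i ≤ c (i + 1)) → (∀ i, i < n - 1 → c i ≤ y) →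
      P[{ω | ∀ i < n - 1, ladderVar X i ω = c i} | {ω | ladderVar X (n - 1) ω = y}]
        = (Nat.card {c' : Fin (n - 1) → S // Monotone c' ∧ ∀ i, c' i ≤ y} : ℝ≥0∞)⁻¹) := by
  constructor
  · intro n hn y hchain
    obtain ⟨m, rfl⟩ : ∃ m, n = m + 1 := ⟨n - 1, by omega⟩
    exact LadderAux.joint_succ hmeas hdist hindep hsupp hpdf hrate m y hchain
  · intro n hn y c hc1 hc2
    exact LadderAux.condPart hα hfin hmeas hdist hindep hsupp hpdf hrate (n - 1) y c hc1 hc2
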